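/- Let H: H₁ → H₂ ← H₃ be Hilbert spaces with densely defined closed unbounded operators T : H₁ → H₂ and S : H₂ → H₃ satisfying S∘T = 0. Let F ⊆ H₂ be a closed subspace containing the range of T. If there is a constant c > 0 such that ‖α‖₂² ≤ c(‖T*α‖₁² + ‖Sα‖₃²) for all α ∈ Dom(T*) ∩ Dom(S) ∩ F, then for every β in the range of T* there exists α ∈ Dom(T*) with T*α = β and ‖α‖₂ ≤ c^{1/2}·‖β‖₁. -/

import Mathlib

/-- Hörmander: let `T : H₁ → H₂` and `S : H₂ → H₃` be closed densely defined
operators between Hilbert spaces with `S∘T = 0`, and let `F ⊆ H₂` be a closed subspace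
containing the range of `T`.  If `‖α‖² ≤ c(‖T*α‖² + ‖Sα‖²)` for all
`α ∈ Dom(T*) ∩ Dom(S) ∩ F`, then every `β` in the range of `T*` has a preimage
`α ∈ Dom(T*)` with `T*α = β` and `‖α‖ ≤ √c·‖β‖`. -/
theorem stmt_4 {H₁ H₂ H₃ : Type*}
    [NormedAddCommGroup H₁] [InnerProductSpace ℝ H₁] [CompleteSpace H₁]
    [NormedAddCommGroup H₂] [InnerProductSpace ℝ H₂] [CompleteSpace H₂]
    [NormedAddCommGroup H₃] [InnerProductSpace ℝ H₃] [CompleteSpace H₃]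
    (T : H₁ →ₗ.[ℝ] H₂) (S : H₂ →ₗ.[ℝ] H₃)
    (hTd : Dense (T.domain : Set H₁)) (hSd : Dense (S.domain : Set H₂))
    (hTc : T.IsClosed) (hSc : S.IsClosed)
    (hST : ∀ x : T.domain, ∃ h : T x ∈ S.domain, S ⟨T x, h⟩ = 0)
    (F : Submodule ℝ H₂) (hF : IsClosed (F : Set H₂))
    (hTF : ∀ x : T.domain, T x ∈ F)
    (c : ℝ) (hc : 0 < c)
    (hineq : ∀ α : H₂, ∀ (h1 : α ∈ T.adjoint.domain) (h2 : α ∈ S.domain), α ∈ F →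
      ‖α‖ ^ 2 ≤ c * (‖T.adjoint ⟨α, h1⟩‖ ^ 2 + ‖S ⟨α, h2⟩‖ ^ 2))
    (β : H₁) (hβ : ∃ γ : T.adjoint.domain, T.adjoint γ = β) :
    ∃ (α : H₂) (hα : α ∈ T.adjoint.domain),
      T.adjoint ⟨α, hα⟩ = β ∧ ‖α‖ ≤ Real.sqrt c * ‖β‖ := by
  obtain ⟨γ, hγ⟩ := hβ
  set R : Submodule ℝ H₂ := LinearMap.range T.toFun with hR
  set N : Submodule ℝ H₂ := R.topologicalClosure with hN
  haveI : CompleteSpace N := R.isClosed_topologicalClosure.completeSpace_coe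
  set α : H₂ := (N.orthogonalProjectionOnto (γ : H₂) : H₂) with hα_def
  have hαN : α ∈ N := (N.orthogonalProjectionOnto (γ : H₂)).2
  have hδ : (γ : H₂) - α ∈ Nᗮ := N.sub_starProjection_mem_orthogonal (γ : H₂)
  -- δ := γ - α is orthogonal to the range of T
  have hδT : ∀ x : T.domain, (inner ℝ ((γ : H₂) - α) (T x) : ℝ) = 0 := by
    intro x
    rw [real_inner_comm]
    exact hδ (T x) (Submodule.le_topologicalClosure R ⟨x, rfl⟩)
  -- α ∈ Dom T*
  have hα : α ∈ T.adjoint.domain := by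
    have hγd := γ.2
    have hδd : (γ : H₂) - α ∈ T.adjoint.domain := by
      apply LinearPMap.mem_adjoint_domain_of_exists
      exact ⟨0, fun x => by rw [inner_zero_left, hδT x]⟩
    have := T.adjoint.domain.sub_mem hγd hδd
    simpa using this
  -- T* α = β
  have hTα : T.adjoint ⟨α, hα⟩ = β := by
    apply LinearPMap.adjoint_apply_eq hTd
    intro x
    have h1 : (inner ℝ (T.adjoint γ) (x : H₁) : ℝ) = inner ℝ (γ : H₂) (T x) :=
      LinearPMap.adjoint_isFormalAdjoint hTd γ x
    have h2 := hδT x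
    rw [inner_sub_left] at h2
    have : (inner ℝ α (T x) : ℝ) = inner ℝ (γ : H₂) (T x) := by linarith
    rw [← hγ, h1, ← this]
  -- α ∈ Dom S and S α = 0
  have hgraph : α ∈ S.domain ∧ ∀ h : α ∈ S.domain, S ⟨α, h⟩ = 0 := by
    have hmem : (α, (0 : H₃)) ∈ S.graph := by
      have himg : (fun y : H₂ => (y, (0 : H₃))) '' (R : Set H₂) ⊆ (S.graph : Set (H₂ × H₃)) := by
        rintro _ ⟨y, ⟨x, rfl⟩, rfl⟩
        obtain ⟨hm, hz⟩ := hST x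
        exact S.mem_graph_iff.2 ⟨⟨T x, hm⟩, rfl, hz⟩
      have hcl : (α, (0 : H₃)) ∈ closure ((fun y : H₂ => (y, (0 : H₃))) '' (R : Set H₂)) := by
        have : α ∈ closure (R : Set H₂) := hαN
        have hmapcl := image_closure_subset_closure_image
          (f := fun y : H₂ => (y, (0 : H₃))) (s := (R : Set H₂))
          (by fun_prop)
        exact hmapcl ⟨α, this, rfl⟩
      have := closure_mono himg hcl
      rwa [hSc.closure_eq] at this
    obtain ⟨y, hy1, hy2⟩ := S.mem_graph_iff.1 hmem
    have hy1' : (y : H₂) = α := hy1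
    refine ⟨hy1' ▸ y.2, fun h => ?_⟩
    have : (⟨α, h⟩ : S.domain) = y := Subtype.ext hy1'.symm
    rw [this, hy2]
  obtain ⟨hαS, hSα⟩ := hgraph
  -- α ∈ F
  have hαF : α ∈ F := by
    have hRF : R ≤ F := by rintro _ ⟨x, rfl⟩; exact hTF x
    exact R.topologicalClosure_minimal hRF hF hαN
  -- the estimate
  have hest := hineq α hα hαS hαF
  rw [hTα, hSα hαS] at hest
  simp only [norm_zero] at hest
  refine ⟨α, hα, hTα, ?_⟩
  have h1 : ‖α‖ ^ 2 ≤ c * ‖β‖ ^ 2 := by linarith [sq_nonneg (0:ℝ)]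
  have h2 : (Real.sqrt c * ‖β‖) ^ 2 = c * ‖β‖ ^ 2 := by
    rw [mul_pow, Real.sq_sqrt hc.le]
  nlinarith [norm_nonneg α, norm_nonneg β, Real.sqrt_nonneg c,
    mul_nonneg (Real.sqrt_nonneg c) (norm_nonneg β)]
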